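/- Let m_j ∈ (0,1) with m_j → 0, and define k_j(s) = 2K(m_j) cn(jK(m_j)s, m_j) for s ∈ [0,1], where additionally m_j = 1/j². Then k_j converges weakly to 0 in L²((0,1)): for every g ∈ L²((0,1)), ∫₀¹ k_j(s) g(s) ds → 0, while ∫₀¹ k_j(s)² ds → π²/2 ≠ 0. -/

import Mathlib

open MeasureTheory intervalIntegral Set Real Filter Topology

lemma aux_per_bound {f : ℝ → ℝ} {T : ℝ} (hT : 0 < T) (hper : Function.Periodic f T)
    (hcont : Continuous f) (hmean : ∫ u in (0:ℝ)..T, f u = 0)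
    (hbdd : ∀ u, |f u| ≤ 1) (a b : ℝ) : |∫ u in a..b, f u| ≤ T := by
  have hint : ∀ t₁ t₂ : ℝ, IntervalIntegrable f volume t₁ t₂ := fun t₁ t₂ =>
    hcont.intervalIntegrable _ _
  have H : ∀ a b : ℝ, a ≤ b → |∫ u in a..b, f u| ≤ T := by
    intro a b hab
    set n : ℤ := ⌊(b - a) / T⌋ with hn
    have hnn : (n : ℝ) ≤ (b - a) / T := Int.floor_le _
    have hnn' : (b - a) / T < n + 1 := Int.lt_floor_add_one _
    have h1 : (n : ℝ) * T ≤ b - a := (le_div_iff₀ hT).1 hnn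
    have h2 : b - a < ((n : ℝ) + 1) * T := (div_lt_iff₀ hT).1 hnn'
    have hz : ∫ u in a..(a + n • T), f u = 0 := by
      rw [hper.intervalIntegral_add_zsmul_eq n a hint, hper.intervalIntegral_add_eq a 0]
      simp [hmean]
    have hsplit := integral_add_adjacent_intervals (hint a (a + n • T)) (hint (a + n • T) b)
    rw [← hsplit, hz, zero_add]
    have hb1 : ∀ x ∈ Set.uIoc (a + n • T) b, ‖f x‖ ≤ 1 := fun x _ => by
      rw [Real.norm_eq_abs]; exact hbdd x
    have hle := intervalIntegral.norm_integral_le_of_norm_le_const hb1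
    rw [Real.norm_eq_abs] at hle
    calc |∫ u in (a + n • T)..b, f u| ≤ 1 * |b - (a + n • T)| := hle
      _ ≤ T := by
          rw [one_mul, zsmul_eq_mul, abs_of_nonneg (by linarith)]
          linarith
  rcases le_total a b with hab | hab
  · exact H a b hab
  · rw [intervalIntegral.integral_symm, abs_neg]; exact H b a hab

lemma aux_split {f : ℝ → ℝ} {T : ℝ} (L : ℝ) (n : ℤ) (hper : Function.Periodic f T)
    (hcont : Continuous f) :
    ∫ u in (0:ℝ)..L, f u = n • (∫ u in (0:ℝ)..T, f u) + ∫ u in ((n:ℝ)*T)..L, f u := by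
  have hint : ∀ t₁ t₂ : ℝ, IntervalIntegrable f volume t₁ t₂ := fun t₁ t₂ =>
    hcont.intervalIntegrable _ _
  have h := hper.intervalIntegral_add_zsmul_eq n 0 hint
  simp only [zero_add, zsmul_eq_mul] at h
  have hadj := integral_add_adjacent_intervals (hint 0 ((n:ℝ)*T)) (hint ((n:ℝ)*T) L)
  rw [← hadj, h]
  simp [zsmul_eq_mul]

set_option maxHeartbeats 1000000 in
/-- The curvatures k_j(s) = 2K(m_j) cn(jK(m_j)s, m_j) with m_j = 1/j² converge
weakly to 0 in L²((0,1)) while ∫₀¹ k_j² → π²/2 ≠ 0. Here cn is the Jacobi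
elliptic cosine and K the complete elliptic integral of the first kind,
characterized by the listed hypotheses. -/
theorem stmt_17 (cn : ℝ → ℝ → ℝ) (K : ℝ → ℝ)
    (hK_pos : ∀ m ∈ Ico (0:ℝ) 1, π/2 ≤ K m)
    (hK_lim : Tendsto K (𝓝[>] (0:ℝ)) (𝓝 (π/2)))
    (hcn_cont : ∀ m ∈ Ico (0:ℝ) 1, Continuous (fun u => cn u m))
    (hcn_bdd : ∀ u : ℝ, ∀ m ∈ Ico (0:ℝ) 1, |cn u m| ≤ 1)
    (hcn_per : ∀ m ∈ Ico (0:ℝ) 1, Function.Periodic (fun u => cn u m) (4 * K m))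
    (hcn_mean : ∀ m ∈ Ico (0:ℝ) 1, ∫ u in (0:ℝ)..(4 * K m), cn u m = 0)
    (hcn_lim : ∀ u : ℝ, Tendsto (fun m => cn u m) (𝓝[>] (0:ℝ)) (𝓝 (Real.cos u)))
    (m : ℕ → ℝ) (hm : ∀ j : ℕ, m j = 1 / (j:ℝ)^2)
    (k : ℕ → ℝ → ℝ)
    (hk : ∀ j : ℕ, ∀ s : ℝ, k j s = 2 * K (m j) * cn ((j:ℝ) * K (m j) * s) (m j)) :
    (∀ g : ℝ → ℝ, MeasureTheory.MemLp g 2 (MeasureTheory.volume.restrict (Ioo (0:ℝ) 1)) →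
      Tendsto (fun j : ℕ => ∫ s in (0:ℝ)..1, k j s * g s) atTop (𝓝 0)) ∧
    Tendsto (fun j : ℕ => ∫ s in (0:ℝ)..1, (k j s)^2) atTop (𝓝 (π^2 / 2)) ∧
    (π^2 / 2 : ℝ) ≠ 0 := by
  have hpi : (0:ℝ) < π := Real.pi_pos
  -- membership of m j
  have hmmem : ∀ j : ℕ, 2 ≤ j → m j ∈ Ico (0:ℝ) 1 := by
    intro j hj
    have hj2 : (2:ℝ) ≤ (j:ℝ) := by exact_mod_cast hj
    have hj0 : (0:ℝ) < (j:ℝ) := by linarith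
    rw [hm]
    constructor
    · positivity
    · rw [div_lt_one (by positivity)]
      nlinarith
  have hmpos : ∀ j : ℕ, 1 ≤ j → 0 < m j := by
    intro j hj
    have hj0 : (0:ℝ) < (j:ℝ) := by exact_mod_cast hj
    rw [hm]; positivity
  -- m j → 0 within Ioi 0
  have hmten : Tendsto m atTop (𝓝[>] (0:ℝ)) := by
    apply tendsto_nhdsWithin_of_tendsto_nhds_of_eventually_within
    · have h1 : Tendsto (fun j : ℕ => ((j:ℝ)^2)) atTop atTop :=
        (tendsto_pow_atTop two_ne_zero).comp tendsto_natCast_atTop_atTop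
      have h2 := h1.inv_tendsto_atTop
      refine h2.congr fun j => ?_
      rw [hm]; simp [one_div]
    · filter_upwards [eventually_ge_atTop 1] with j hj using hmpos j hj
  have hKt : Tendsto (fun j : ℕ => K (m j)) atTop (𝓝 (π/2)) := hK_lim.comp hmten
  have hKpos : ∀ j : ℕ, 2 ≤ j → 0 < K (m j) := fun j hj =>
    lt_of_lt_of_le (by positivity) (hK_pos _ (hmmem j hj))
  have hKle : ∀ᶠ j : ℕ in atTop, K (m j) < 2 := by
    have : π/2 < 2 := by nlinarith [Real.pi_lt_d2]
    exact hKt.eventually (eventually_lt_nhds this)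
  have hcont_k : ∀ j : ℕ, 2 ≤ j → Continuous (k j) := by
    intro j hj
    have : k j = fun s => 2 * K (m j) * cn ((j:ℝ) * K (m j) * s) (m j) := funext (hk j)
    rw [this]
    exact continuous_const.mul
      ((hcn_cont _ (hmmem j hj)).comp (continuous_const.mul continuous_id))
  have hkbdd : ∀ j : ℕ, 2 ≤ j → ∀ s : ℝ, |k j s| ≤ 2 * K (m j) := by
    intro j hj s
    rw [hk, abs_mul]
    have h1 : |2 * K (m j)| = 2 * K (m j) := abs_of_pos (by have := hKpos j hj; positivity)
    rw [h1]
    have h2 := hcn_bdd ((j:ℝ) * K (m j) * s) _ (hmmem j hj)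
    nlinarith [hKpos j hj, abs_nonneg (cn ((j:ℝ) * K (m j) * s) (m j))]
  -- the key primitive bound
  have hFbound : ∀ j : ℕ, 2 ≤ j → ∀ a b : ℝ, |∫ s in a..b, k j s| ≤ 8 * K (m j) / j := by
    intro j hj a b
    have hμ := hmmem j hj
    have hj0 : (0:ℝ) < (j:ℝ) := by
      have : (2:ℝ) ≤ (j:ℝ) := by exact_mod_cast hj
      linarith
    have hKp := hKpos j hj
    have hc : ((j:ℝ) * K (m j)) ≠ 0 := by positivity
    have h1 : (∫ s in a..b, k j s)
        = 2 * K (m j) * ∫ s in a..b, cn ((j:ℝ) * K (m j) * s) (m j) := by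
      simp_rw [hk j]
      rw [intervalIntegral.integral_const_mul]
    have h2 : (∫ s in a..b, cn ((j:ℝ) * K (m j) * s) (m j))
        = ((j:ℝ) * K (m j))⁻¹ • ∫ u in ((j:ℝ) * K (m j) * a)..((j:ℝ) * K (m j) * b), cn u (m j) :=
      integral_comp_mul_left (fun u => cn u (m j)) hc
    have hb := aux_per_bound (T := 4 * K (m j)) (by positivity) (hcn_per _ hμ)
      (hcn_cont _ hμ) (hcn_mean _ hμ) (fun u => hcn_bdd u _ hμ)
      ((j:ℝ) * K (m j) * a) ((j:ℝ) * K (m j) * b)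
    rw [h1, h2, smul_eq_mul, abs_mul, abs_mul, abs_mul, abs_two, abs_of_pos hKp,
      abs_of_pos (show (0:ℝ) < ((j:ℝ) * K (m j))⁻¹ by positivity)]
    rw [show (8:ℝ) * K (m j) / j
        = 2 * K (m j) * (((j:ℝ) * K (m j))⁻¹ * (4 * K (m j))) from by field_simp; ring]
    gcongr
  refine ⟨?_, ?_, by positivity⟩
  · intro g hg
    rw [NormedAddCommGroup.tendsto_nhds_zero]
    intro ε hε
    haveI hfin : IsFiniteMeasure (volume.restrict (Ioo (0:ℝ) 1)) := by
      constructor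
      rw [Measure.restrict_apply_univ]
      simp [Real.volume_Ioo]
    have hgi : Integrable g (volume.restrict (Ioo (0:ℝ) 1)) :=
      hg.integrable (by norm_num)
    set g' : ℝ → ℝ := (Ioo (0:ℝ) 1).indicator g with hg'def
    have hgi' : Integrable g' volume := (integrable_indicator_iff measurableSet_Ioo).2 hgi
    obtain ⟨φ, φsupp, φL1, φcont, φint⟩ :=
      hgi'.exists_hasCompactSupport_integral_sub_le (ε := ε/16) (by positivity)
    obtain ⟨p, hp⟩ := exists_polynomial_near_of_continuousOn 0 1 φ
      φcont.continuousOn (ε/16) (by positivity)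
    have hsubint : Integrable (fun s => ‖g' s - φ s‖) volume := (hgi'.sub φint).norm
    have hL1 : (∫ s in (0:ℝ)..1, ‖g' s - φ s‖) ≤ ε/16 := by
      rw [intervalIntegral.integral_of_le (by norm_num : (0:ℝ) ≤ 1)]
      exact le_trans (setIntegral_le_integral hsubint
        (Eventually.of_forall fun x => norm_nonneg _)) φL1
    -- polynomial part tends to zero by integration by parts
    have hpoly : Tendsto (fun j : ℕ => ∫ s in (0:ℝ)..1, k j s * Polynomial.eval s p)
        atTop (𝓝 0) := by
      obtain ⟨Mp, hMp⟩ := (isCompact_uIcc (a := (0:ℝ)) (b := 1)).exists_bound_of_continuousOn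
        (Polynomial.continuous (Polynomial.derivative p)).continuousOn
      have hMp0 : 0 ≤ Mp :=
        le_trans (norm_nonneg _) (hMp 0 (by simp [Set.left_mem_uIcc]))
      set C : ℝ := (|Polynomial.eval (1:ℝ) p| + Mp) * 16 with hC
      apply squeeze_zero_norm' (a := fun j : ℕ => C / (j:ℝ))
      · filter_upwards [eventually_ge_atTop 2, hKle] with j hj hK2
        have hkc := hcont_k j hj
        have hKp := hKpos j hj
        have hj0 : (0:ℝ) < (j:ℝ) := by
          have : (2:ℝ) ≤ (j:ℝ) := by exact_mod_cast hj
          linarith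
        set F : ℝ → ℝ := fun x => ∫ t in (0:ℝ)..x, k j t with hFdef
        have hFd : ∀ x ∈ uIcc (0:ℝ) 1, HasDerivAt F (k j x) x := fun x _ =>
          intervalIntegral.integral_hasDerivAt_right (hkc.intervalIntegrable _ _)
            (hkc.stronglyMeasurableAtFilter _ _) hkc.continuousAt
        have hpd : ∀ x ∈ uIcc (0:ℝ) 1, HasDerivAt (fun y => Polynomial.eval y p)
            (Polynomial.eval x (Polynomial.derivative p)) x := fun x _ => p.hasDerivAt x
        have hparts := intervalIntegral.integral_mul_deriv_eq_deriv_mul hpd hFd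
          ((Polynomial.continuous _).intervalIntegrable _ _) (hkc.intervalIntegrable _ _)
        have hFb : ∀ x : ℝ, |F x| ≤ 8 * K (m j) / j := fun x => hFbound j hj 0 x
        have hcomm : (∫ s in (0:ℝ)..1, k j s * Polynomial.eval s p)
            = ∫ s in (0:ℝ)..1, Polynomial.eval s p * k j s :=
          intervalIntegral.integral_congr fun x _ => mul_comm _ _
        have hF0 : F 0 = 0 := intervalIntegral.integral_same
        have hint_bd : ‖∫ x in (0:ℝ)..1, Polynomial.eval x (Polynomial.derivative p) * F x‖
            ≤ Mp * (8 * K (m j) / j) * |1 - (0:ℝ)| := by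
          apply intervalIntegral.norm_integral_le_of_norm_le_const
          intro x hx
          have hx' : x ∈ uIcc (0:ℝ) 1 := by
            rw [Set.uIoc_of_le (by norm_num : (0:ℝ) ≤ 1)] at hx
            rw [Set.uIcc_of_le (by norm_num : (0:ℝ) ≤ 1)]
            exact Ioc_subset_Icc_self hx
          have h1 := hMp x hx'
          rw [Real.norm_eq_abs] at h1 ⊢
          rw [abs_mul]
          have h2 := hFb x
          have h3 : (0:ℝ) ≤ 8 * K (m j) / j := by positivity
          nlinarith [abs_nonneg (Polynomial.eval x (Polynomial.derivative p)), abs_nonneg (F x)]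
        rw [Real.norm_eq_abs, hcomm, hparts, hF0, mul_zero, sub_zero]
        have hstep : |Polynomial.eval (1:ℝ) p * F 1
              - ∫ x in (0:ℝ)..1, Polynomial.eval x (Polynomial.derivative p) * F x|
            ≤ |Polynomial.eval (1:ℝ) p| * (8 * K (m j) / j) + Mp * (8 * K (m j) / j) := by
          refine (abs_sub _ _).trans ?_
          gcongr
          · rw [abs_mul]
            have := hFb 1
            have h3 : (0:ℝ) ≤ |Polynomial.eval (1:ℝ) p| := abs_nonneg _
            nlinarith [abs_nonneg (F 1)]
          · rw [Real.norm_eq_abs] at hint_bd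
            simpa using hint_bd
        refine hstep.trans ?_
        have h8 : 8 * K (m j) / (j:ℝ) ≤ 16 / (j:ℝ) := by
          gcongr
          linarith
        calc |Polynomial.eval (1:ℝ) p| * (8 * K (m j) / j) + Mp * (8 * K (m j) / j)
            = (|Polynomial.eval (1:ℝ) p| + Mp) * (8 * K (m j) / j) := by ring
          _ ≤ (|Polynomial.eval (1:ℝ) p| + Mp) * (16 / (j:ℝ)) := by
              have h0 : (0:ℝ) ≤ |Polynomial.eval (1:ℝ) p| + Mp := by positivity
              exact mul_le_mul_of_nonneg_left h8 h0
          _ = C / (j:ℝ) := by rw [hC]; ring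
      · have := tendsto_const_div_atTop_nhds_zero_nat C
        exact this
    have hpoly' := (NormedAddCommGroup.tendsto_nhds_zero.mp hpoly) (ε/4) (by positivity)
    filter_upwards [eventually_ge_atTop 2, hKle, hpoly'] with j hj hK2 hpj
    have hkc := hcont_k j hj
    have hKp := hKpos j hj
    have hk4 : ∀ s, |k j s| ≤ 4 := fun s => le_trans (hkbdd j hj s) (by linarith)
    have hkbddnorm : ∃ Cb : ℝ, ∀ x, ‖k j x‖ ≤ Cb :=
      ⟨4, fun x => by rw [Real.norm_eq_abs]; exact hk4 x⟩
    have hcongr : (∫ s in (0:ℝ)..1, k j s * g s) = ∫ s in (0:ℝ)..1, k j s * g' s := by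
      apply intervalIntegral.integral_congr_ae
      have h1 : ∀ᵐ x ∂(volume : Measure ℝ), x ∈ ({(1:ℝ)}ᶜ : Set ℝ) :=
        compl_mem_ae_iff.2 (measure_singleton 1)
      filter_upwards [h1] with x hx hmem
      rw [Set.uIoc_of_le (by norm_num : (0:ℝ) ≤ 1)] at hmem
      have hxIoo : x ∈ Ioo (0:ℝ) 1 := ⟨hmem.1, lt_of_le_of_ne hmem.2 hx⟩
      rw [hg'def, Set.indicator_of_mem hxIoo]
    have hi1 : IntervalIntegrable (fun s => k j s * (g' s - φ s)) volume 0 1 :=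
      (Integrable.bdd_mul (hgi'.sub φint) hkc.aestronglyMeasurable
        (ae_of_all _ hkbddnorm.choose_spec)).intervalIntegrable
    have hi2 : IntervalIntegrable (fun s => k j s * (φ s - Polynomial.eval s p)) volume 0 1 :=
      (hkc.mul (φcont.sub (Polynomial.continuous _))).intervalIntegrable _ _
    have hi3 : IntervalIntegrable (fun s => k j s * Polynomial.eval s p) volume 0 1 :=
      (hkc.mul (Polynomial.continuous _)).intervalIntegrable _ _
    have hsplit : (∫ s in (0:ℝ)..1, k j s * g' s)
        = (∫ s in (0:ℝ)..1, k j s * (g' s - φ s))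
          + ((∫ s in (0:ℝ)..1, k j s * (φ s - Polynomial.eval s p))
          + ∫ s in (0:ℝ)..1, k j s * Polynomial.eval s p) := by
      rw [← intervalIntegral.integral_add hi2 hi3,
        ← intervalIntegral.integral_add hi1 (hi2.add hi3)]
      apply intervalIntegral.integral_congr
      intro x _
      ring
    have hbound1 : |∫ s in (0:ℝ)..1, k j s * (g' s - φ s)| ≤ ε/4 := by
      have habs : ‖∫ s in (0:ℝ)..1, k j s * (g' s - φ s)‖
          ≤ ∫ s in (0:ℝ)..1, ‖k j s * (g' s - φ s)‖ :=
        intervalIntegral.norm_integral_le_integral_norm (by norm_num)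
      rw [Real.norm_eq_abs] at habs
      have hmono : (∫ s in (0:ℝ)..1, ‖k j s * (g' s - φ s)‖)
          ≤ ∫ s in (0:ℝ)..1, 4 * ‖g' s - φ s‖ := by
        apply intervalIntegral.integral_mono_on (by norm_num)
          (Integrable.bdd_mul (hgi'.sub φint) hkc.aestronglyMeasurable
            (ae_of_all _ hkbddnorm.choose_spec)).norm.intervalIntegrable
          ((hgi'.sub φint).norm.const_mul 4).intervalIntegrable
        intro x _
        simp only [Pi.sub_apply, Real.norm_eq_abs, abs_mul]
        exact mul_le_mul_of_nonneg_right (hk4 x) (abs_nonneg _)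
      have h4 : (∫ s in (0:ℝ)..1, 4 * ‖g' s - φ s‖)
          = 4 * ∫ s in (0:ℝ)..1, ‖g' s - φ s‖ := intervalIntegral.integral_const_mul _ _
      calc |∫ s in (0:ℝ)..1, k j s * (g' s - φ s)|
          ≤ ∫ s in (0:ℝ)..1, ‖k j s * (g' s - φ s)‖ := habs
        _ ≤ ∫ s in (0:ℝ)..1, 4 * ‖g' s - φ s‖ := hmono
        _ = 4 * ∫ s in (0:ℝ)..1, ‖g' s - φ s‖ := h4
        _ ≤ 4 * (ε/16) := by linarith
        _ ≤ ε/4 := by linarith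
    have hbound2 : |∫ s in (0:ℝ)..1, k j s * (φ s - Polynomial.eval s p)| ≤ ε/4 := by
      have hb1 : ∀ x ∈ Set.uIoc (0:ℝ) 1, ‖k j x * (φ x - Polynomial.eval x p)‖ ≤ 4 * (ε/16) := by
        intro x hx
        have hx' : x ∈ Icc (0:ℝ) 1 := by
          rw [Set.uIoc_of_le (by norm_num : (0:ℝ) ≤ 1)] at hx
          exact Ioc_subset_Icc_self hx
        have h1 := hk4 x
        have h2 : |φ x - Polynomial.eval x p| ≤ ε/16 := by
          rw [abs_sub_comm]
          exact le_of_lt (hp x hx')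
        rw [Real.norm_eq_abs, abs_mul]
        nlinarith [abs_nonneg (k j x), abs_nonneg (φ x - Polynomial.eval x p)]
      have hle := intervalIntegral.norm_integral_le_of_norm_le_const hb1
      rw [Real.norm_eq_abs] at hle
      refine hle.trans ?_
      rw [show |(1:ℝ) - 0| = 1 by norm_num]
      linarith
    rw [Real.norm_eq_abs, hcongr, hsplit]
    rw [Real.norm_eq_abs] at hpj
    calc |(∫ s in (0:ℝ)..1, k j s * (g' s - φ s))
          + ((∫ s in (0:ℝ)..1, k j s * (φ s - Polynomial.eval s p))
          + ∫ s in (0:ℝ)..1, k j s * Polynomial.eval s p)|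
        ≤ |∫ s in (0:ℝ)..1, k j s * (g' s - φ s)|
          + (|∫ s in (0:ℝ)..1, k j s * (φ s - Polynomial.eval s p)|
          + |∫ s in (0:ℝ)..1, k j s * Polynomial.eval s p|) := by
          refine (abs_add_le _ _).trans ?_
          gcongr
          exact abs_add_le _ _
      _ < ε := by linarith
  · -- ∫₀¹ k² → π²/2
    set Ij : ℕ → ℝ := fun j => ∫ u in (0:ℝ)..(4 * K (m j)), (cn u (m j))^2 with hIj
    have hI : Tendsto Ij atTop (𝓝 π) := by
      have hA : Tendsto (fun j : ℕ => ∫ u in (0:ℝ)..(2*π), (cn u (m j))^2) atTop (𝓝 π) := by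
        rw [← tendsto_add_atTop_iff_nat 2]
        have h2π : (0:ℝ) ≤ 2*π := by positivity
        have hcos : (∫ u in Ioc (0:ℝ) (2*π), (cos u)^2 ∂volume) = π := by
          rw [← intervalIntegral.integral_of_le h2π, integral_cos_sq]
          simp [Real.cos_two_pi, Real.sin_two_pi]
        have hdct := MeasureTheory.tendsto_integral_of_dominated_convergence
          (μ := volume.restrict (Ioc (0:ℝ) (2*π)))
          (F := fun j u => (cn u (m (j+2)))^2) (f := fun u => (cos u)^2)
          (bound := fun _ => 1)
          (fun j => ((hcn_cont _ (hmmem (j+2) (by omega))).pow 2).aestronglyMeasurable)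
          (integrableOn_const measure_Ioc_lt_top.ne)
          (fun j => Eventually.of_forall fun u => by
            show ‖cn u (m (j+2)) ^ 2‖ ≤ (1:ℝ)
            have hb1 := hcn_bdd u _ (hmmem (j+2) (by omega))
            rw [Real.norm_eq_abs, abs_of_nonneg (sq_nonneg _), ← sq_abs]
            nlinarith [abs_nonneg (cn u (m (j+2)))])
          (Eventually.of_forall fun u => by
            have h1 : Tendsto (fun j : ℕ => m (j+2)) atTop (𝓝[>] (0:ℝ)) :=
              hmten.comp (tendsto_add_atTop_nat 2)
            exact ((hcn_lim u).comp h1).pow 2)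
        rw [hcos] at hdct
        exact Tendsto.congr
          (fun j => (intervalIntegral.integral_of_le h2π).symm) hdct
      have hB : Tendsto (fun j : ℕ => ∫ u in (2*π)..(4 * K (m j)), (cn u (m j))^2)
          atTop (𝓝 0) := by
        apply squeeze_zero_norm' (a := fun j : ℕ => |4 * K (m j) - 2*π|)
        · filter_upwards [eventually_ge_atTop 2] with j hj
          have hμ := hmmem j hj
          have hb1 : ∀ x ∈ Set.uIoc (2*π) (4*K (m j)), ‖(cn x (m j))^2‖ ≤ 1 := by
            intro x _
            have := hcn_bdd x _ hμ
            rw [Real.norm_eq_abs, abs_of_nonneg (sq_nonneg _), ← sq_abs]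
            nlinarith [abs_nonneg (cn x (m j))]
          have hle := intervalIntegral.norm_integral_le_of_norm_le_const hb1
          simpa using hle
        · have h4K : Tendsto (fun j : ℕ => 4 * K (m j) - 2*π) atTop (𝓝 0) := by
            have h0 := (hKt.const_mul 4).sub_const (2*π)
            have e : 4 * (π/2) - 2*π = 0 := by ring
            rwa [e] at h0
          simpa using h4K.abs
      have hsum : ∀ᶠ j : ℕ in atTop, (∫ u in (0:ℝ)..(2*π), (cn u (m j))^2)
          + (∫ u in (2*π)..(4*K (m j)), (cn u (m j))^2) = Ij j := by
        filter_upwards [eventually_ge_atTop 2] with j hj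
        exact integral_add_adjacent_intervals
          (((hcn_cont _ (hmmem j hj)).pow 2).intervalIntegrable _ _)
          (((hcn_cont _ (hmmem j hj)).pow 2).intervalIntegrable _ _)
      have hAB := hA.add hB
      rw [add_zero] at hAB
      exact Tendsto.congr' hsum hAB
    have hq : Tendsto (fun j : ℕ => 4 * ((j/4 : ℕ) : ℝ) / (j:ℝ)) atTop (𝓝 1) := by
      rw [← tendsto_sub_nhds_zero_iff]
      apply squeeze_zero_norm' (a := fun j : ℕ => 3 / (j:ℝ))
      · filter_upwards [eventually_ge_atTop 4] with j hj
        have hj0 : (0:ℝ) < (j:ℝ) := by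
          have : (4:ℝ) ≤ (j:ℝ) := by exact_mod_cast hj
          linarith
        have hdm := Nat.div_add_mod j 4
        have hmod : j % 4 < 4 := Nat.mod_lt _ (by norm_num)
        have hc1 : ((4 * (j/4) + j % 4 : ℕ) : ℝ) = (j:ℝ) := by exact_mod_cast hdm
        push_cast at hc1
        have hmod3 : ((j % 4 : ℕ):ℝ) ≤ 3 := by
          have : j % 4 ≤ 3 := Nat.lt_succ_iff.mp hmod
          exact_mod_cast this
        have h3 : 4 * ((j/4:ℕ):ℝ) / (j:ℝ) - 1 = -(((j % 4:ℕ):ℝ) / (j:ℝ)) := by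
          field_simp
          linarith
        rw [Real.norm_eq_abs, h3, abs_neg, abs_of_nonneg (by positivity)]
        gcongr
      · exact tendsto_const_div_atTop_nhds_zero_nat 3
    have hG : Tendsto (fun j : ℕ => (4*((j/4:ℕ):ℝ)/(j:ℝ)) * (K (m j) * Ij j))
        atTop (𝓝 (π^2/2)) := by
      have h0 := hq.mul (hKt.mul hI)
      have e : (1:ℝ) * (π/2*π) = π^2/2 := by ring
      rwa [e] at h0
    have hclose : ∀ᶠ j : ℕ in atTop,
        |(∫ s in (0:ℝ)..1, (k j s)^2) - (4*((j/4:ℕ):ℝ)/(j:ℝ)) * (K (m j) * Ij j)|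
          ≤ 16 * (K (m j))^2 / (j:ℝ) := by
      filter_upwards [eventually_ge_atTop 2] with j hj
      have hμ := hmmem j hj
      have hKp := hKpos j hj
      have hj0 : (0:ℝ) < (j:ℝ) := by
        have : (2:ℝ) ≤ (j:ℝ) := by exact_mod_cast hj
        linarith
      have hc : ((j:ℝ) * K (m j)) ≠ 0 := by positivity
      have hcont2 : Continuous (fun u => (cn u (m j))^2) := (hcn_cont _ hμ).pow 2
      have hper2 : Function.Periodic (fun u => (cn u (m j))^2) (4 * K (m j)) := by
        intro x
        exact congrArg (fun y => y^2) (hcn_per _ hμ x)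
      have e1 : (∫ s in (0:ℝ)..1, (k j s)^2)
          = (4 * K (m j) / (j:ℝ)) * ∫ u in (0:ℝ)..((j:ℝ) * K (m j)), (cn u (m j))^2 := by
        have h1 : (∫ s in (0:ℝ)..1, (k j s)^2)
            = (4 * (K (m j))^2) *
              ∫ s in (0:ℝ)..1, (fun u => (cn u (m j))^2) ((j:ℝ) * K (m j) * s) := by
          rw [← intervalIntegral.integral_const_mul]
          apply intervalIntegral.integral_congr
          intro x _
          simp only []
          rw [hk]
          ring
        have h2 := integral_comp_mul_left (fun u => (cn u (m j))^2) hc (a := 0) (b := 1)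
        rw [h1, h2, mul_zero, mul_one, smul_eq_mul]
        field_simp
      set n : ℤ := ((j / 4 : ℕ) : ℤ) with hndef
      have e2 := aux_split (f := fun u => (cn u (m j))^2) (T := 4 * K (m j))
        ((j:ℝ) * K (m j)) n hper2 hcont2
      have hdm := Nat.div_add_mod j 4
      have hmod : j % 4 < 4 := Nat.mod_lt _ (by norm_num)
      have hc1 : ((4 * (j/4) + j % 4 : ℕ) : ℝ) = (j:ℝ) := by exact_mod_cast hdm
      push_cast at hc1
      have hmod0 : (0:ℝ) ≤ ((j % 4 : ℕ):ℝ) := by positivity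
      have hmod3 : ((j % 4 : ℕ):ℝ) ≤ 3 := by
        have : j % 4 ≤ 3 := Nat.lt_succ_iff.mp hmod
        exact_mod_cast this
      have hn4 : ((n:ℝ)) = ((j/4 : ℕ):ℝ) := by rw [hndef, Int.cast_natCast]
      have hnT1 : ((n:ℝ)) * (4 * K (m j)) ≤ (j:ℝ) * K (m j) := by
        rw [hn4]; nlinarith
      have hnT2 : (j:ℝ) * K (m j) - ((n:ℝ)) * (4*K (m j)) ≤ 4 * K (m j) := by
        rw [hn4]; nlinarith
      have hrem : |∫ u in ((n:ℝ) * (4*K (m j)))..((j:ℝ)*K (m j)), (cn u (m j))^2|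
          ≤ 4 * K (m j) := by
        have hb1 : ∀ x ∈ Set.uIoc ((n:ℝ)*(4*K (m j))) ((j:ℝ)*K (m j)),
            ‖(cn x (m j))^2‖ ≤ 1 := by
          intro x _
          have := hcn_bdd x _ hμ
          rw [Real.norm_eq_abs, abs_of_nonneg (sq_nonneg _), ← sq_abs]
          nlinarith [abs_nonneg (cn x (m j))]
        have hle := intervalIntegral.norm_integral_le_of_norm_le_const hb1
        rw [Real.norm_eq_abs, one_mul] at hle
        refine hle.trans ?_
        rw [abs_of_nonneg (by linarith)]
        linarith
      have e3 : (∫ s in (0:ℝ)..1, (k j s)^2) - (4*((j/4:ℕ):ℝ)/(j:ℝ)) * (K (m j) * Ij j)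
          = (4 * K (m j) / (j:ℝ)) *
            ∫ u in ((n:ℝ)*(4*K (m j)))..((j:ℝ)*K (m j)), (cn u (m j))^2 := by
        rw [e1, e2, zsmul_eq_mul, hn4]
        simp only [hIj]
        field_simp
        ring
      rw [e3, abs_mul, abs_of_nonneg (by positivity : (0:ℝ) ≤ 4 * K (m j)/(j:ℝ))]
      calc 4*K (m j)/(j:ℝ) * |∫ u in ((n:ℝ)*(4*K (m j)))..((j:ℝ)*K (m j)), (cn u (m j))^2|
          ≤ 4*K (m j)/(j:ℝ) * (4*K (m j)) := by gcongr
        _ = 16 * (K (m j))^2/(j:ℝ) := by field_simp; ring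
    have hE : Tendsto (fun j : ℕ => (∫ s in (0:ℝ)..1, (k j s)^2)
        - (4*((j/4:ℕ):ℝ)/(j:ℝ)) * (K (m j) * Ij j)) atTop (𝓝 0) := by
      apply squeeze_zero_norm' (a := fun j : ℕ => 16 * (K (m j))^2 / (j:ℝ))
      · filter_upwards [hclose] with j h using by simpa [Real.norm_eq_abs] using h
      · have h1 : Tendsto (fun j : ℕ => 16 * (K (m j))^2 * (1/(j:ℝ))) atTop
            (𝓝 (16*(π/2)^2 * 0)) :=
          (tendsto_const_nhds.mul (hKt.pow 2)).mul tendsto_one_div_atTop_nhds_zero_nat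
        rw [mul_zero] at h1
        exact h1.congr fun j => by rw [mul_one_div]
    have hfinal := hG.add hE
    rw [add_zero] at hfinal
    refine hfinal.congr fun j => ?_
    ring
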